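/- arXiv:0708.0197 — 2 statements merged into one kernel-verified Lean document; each statement's English description precedes it below -/
import Mathlib

section
/- Let n ≥ 3, N = ⌊(n−1)/2⌋, 1 ≤ i ≤ j ≤ N, and let a_i ∈ {±λ_i}, a_j ∈ {±λ_j} with a_i + a_j ≠ 0. Then (i) L_{n0}(a_i + a_j) ≤ n c_{ijn}/(2π), and (ii) for each 0 < d < 1 there is a constant C(d), independent of n, i, j, such that L_{n1}(a_i + a_j) ≤ min{ log(nπ) L_{n0}(a_i + a_j), n C(d) (c_{ijn})^d }. -/
open Real Filter Topology

noncomputable section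

/-- The Fourier frequency `λ_j = 2πj/n`. -/
def ff (n j : ℕ) : ℝ := 2 * π * j / n

/-- The base function of `L_{ns}` on `Π = [−π, π]`:
`e^{−s} n` for `|λ| ≤ e^s/n` and `(log(n|λ|))^s / |λ|` otherwise. -/
def Lbase (n s : ℕ) (x : ℝ) : ℝ :=
  if |x| ≤ Real.exp s / n then Real.exp (-(s : ℝ)) * n
  else (Real.log (n * |x|)) ^ s / |x|

/-- `L_{ns} : ℝ → ℝ`, the 2π-periodic extension of `Lbase n s` (using the representative
of `λ` modulo `2π` lying in `(−π, π]`). -/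
def Lfun (n s : ℕ) (lam : ℝ) : ℝ := Lbase n s (toIocMod Real.two_pi_pos (-π) lam)

end

namespace NLaux

lemma abs_toIocMod_eq (x : ℝ) (h : |x| ≤ π) :
    |toIocMod Real.two_pi_pos (-π) x| = |x| := by
  have hpi := Real.pi_pos
  have hx1 : -π ≤ x := neg_le_of_abs_le h
  have hx2 : x ≤ π := le_of_abs_le h
  rcases eq_or_lt_of_le hx1 with he | hl
  · have h1 : toIocMod Real.two_pi_pos (-π) x = -π + 2 * π := by
      rw [← he]
      have h2 : toIocMod Real.two_pi_pos (-π) (-π + 2 * π)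
          = toIocMod Real.two_pi_pos (-π) (-π) := toIocMod_add_right _ _ _
      rw [← h2, (toIocMod_eq_self _).2 ⟨by linarith, le_rfl⟩]
    rw [h1, ← he]
    rw [abs_of_nonneg (by linarith), abs_of_nonpos (by linarith)]
    ring
  · rw [(toIocMod_eq_self _).2 ⟨hl, by linarith⟩]

lemma Lfun_eq_of_rep (n k : ℕ) (hn : 3 ≤ n) (hk1 : 1 ≤ k) (x : ℝ)
    (hx : |toIocMod Real.two_pi_pos (-π) x| = 2 * π * k / n) :
    Lfun n 0 x = n / (2 * π * k) ∧
    Lfun n 1 x = Real.log (2 * π * k) * (n / (2 * π * k)) := by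
  have hpi := Real.pi_gt_three
  have hn0 : (0:ℝ) < n := by positivity
  have hk0 : (1:ℝ) ≤ k := by exact_mod_cast hk1
  have hbig : Real.exp 1 < 2 * π * k := by
    have h1 : Real.exp 1 < 2.7182818286 := Real.exp_one_lt_d9
    nlinarith
  have hbig0 : (1:ℝ) < 2 * π * k := by nlinarith [Real.exp_pos 1, Real.add_one_le_exp 1]
  have hr : (2:ℝ) * π * k / n > 0 := by positivity
  constructor
  · rw [Lfun, Lbase, hx, if_neg]
    · rw [pow_zero]
      rw [eq_div_iff (by positivity)]
      field_simp
    · push_neg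
      rw [Nat.cast_zero, Real.exp_zero, div_lt_div_iff₀ hn0 hn0]
      nlinarith
  · rw [Lfun, Lbase, hx, if_neg]
    · rw [pow_one]
      have : (n:ℝ) * (2 * π * k / n) = 2 * π * k := by field_simp
      rw [this]
      rw [div_div_eq_mul_div, mul_div_assoc]
    · push_neg
      rw [Nat.cast_one, div_lt_div_iff₀ hn0 hn0]
      nlinarith

lemma key (n : ℕ) (hn : 3 ≤ n) (i j : ℕ) (hi : 1 ≤ i) (hij : i ≤ j) (hjN : j ≤ (n-1)/2)
    (si sj : ℝ) (hsi : si = 1 ∨ si = -1) (hsj : sj = 1 ∨ sj = -1)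
    (hne : si * ff n i + sj * ff n j ≠ 0) :
    ∃ k : ℕ, 1 ≤ k ∧ 2 * k ≤ n ∧
      |toIocMod Real.two_pi_pos (-π) (si * ff n i + sj * ff n j)| = 2 * π * k / n ∧
      (if si ≠ sj then ((j : ℝ) - (i : ℝ))⁻¹
        else if (i : ℝ) + (j : ℝ) ≤ (n : ℝ) / 2 then ((j : ℝ) + (i : ℝ))⁻¹
        else ((n : ℝ) - (j : ℝ) - (i : ℝ))⁻¹) = ((k : ℝ))⁻¹ := by
  have hpi := Real.pi_pos
  have h2j : 2 * j < n := by omega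
  have hn0 : (0:ℝ) < n := by positivity
  have hin : (i:ℝ) ≤ j := by exact_mod_cast hij
  rcases hsi with rfl | rfl <;> rcases hsj with rfl | rfl
  · -- si = sj = 1, x = 2π(i+j)/n
    have hx : (1:ℝ) * ff n i + 1 * ff n j = 2 * π * (↑(i+j) : ℝ) / n := by
      rw [ff, ff]; push_cast; ring
    by_cases hc : 2 * (i + j) ≤ n
    · refine ⟨i + j, by omega, hc, ?_, ?_⟩
      · rw [hx, abs_toIocMod_eq, abs_of_nonneg (by positivity)]
        rw [abs_of_nonneg (by positivity), div_le_iff₀ hn0]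
        have : ((2*(i + j):ℕ):ℝ) ≤ n := by exact_mod_cast hc
        push_cast at this; push_cast; nlinarith
      · rw [if_neg (by simp), if_pos, inv_inj]
        · push_cast; ring
        · have : ((2 * (i+j) : ℕ) : ℝ) ≤ n := by exact_mod_cast hc
          push_cast at this; linarith
    · refine ⟨n - (i + j), by omega, by omega, ?_, ?_⟩
      · have hxs : toIocMod Real.two_pi_pos (-π) (2 * π * (↑(i+j) : ℝ) / n)
            = toIocMod Real.two_pi_pos (-π) (2 * π * (↑(i+j) : ℝ) / n - 2 * π) :=
          (toIocMod_sub _ _ _).symm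
        have hij2 : (n:ℝ) < 2 * ((i:ℝ) + j) := by
          have : (n:ℕ) < 2 * (i + j) := by omega
          exact_mod_cast this
        have hijn : (i:ℝ) + j ≤ n := by
          have : i + j ≤ n := by omega
          exact_mod_cast this
        have heq : 2 * π * (↑(i+j) : ℝ) / n - 2 * π = -(2 * π * (↑(n - (i+j)):ℝ) / n) := by
          have : ((n - (i+j) : ℕ) : ℝ) = (n:ℝ) - ((i:ℝ) + j) := by
            rw [Nat.cast_sub (by omega)]; push_cast; ring
          rw [this]; push_cast; field_simp; ring
        rw [hx, hxs, heq, abs_toIocMod_eq, abs_neg, abs_of_nonneg (by positivity)]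
        rw [abs_neg, abs_of_nonneg (by positivity), div_le_iff₀ hn0]
        have : ((n - (i+j) : ℕ) : ℝ) = (n:ℝ) - ((i:ℝ) + j) := by
          rw [Nat.cast_sub (by omega)]; push_cast; ring
        rw [this]; nlinarith
      · rw [if_neg (by simp), if_neg, inv_inj]
        · rw [Nat.cast_sub (by omega)]; push_cast; ring
        · push_neg
          have : (n:ℕ) < 2 * (i + j) := by omega
          have h2 : (n:ℝ) < 2 * ((i:ℝ) + j) := by exact_mod_cast this
          linarith
  · -- si = 1, sj = -1, x = -(2π(j-i)/n)
    have hij' : i < j := by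
      rcases eq_or_lt_of_le hij with rfl | h
      · exfalso; apply hne; rw [ff]; ring
      · exact h
    refine ⟨j - i, by omega, by omega, ?_, ?_⟩
    · have hx : (1:ℝ) * ff n i + (-1) * ff n j = -(2 * π * (↑(j - i) : ℝ) / n) := by
        rw [ff, ff, Nat.cast_sub hij]; field_simp; ring
      rw [hx, abs_toIocMod_eq, abs_neg, abs_of_nonneg (by positivity)]
      rw [abs_neg, abs_of_nonneg (by positivity), div_le_iff₀ hn0]
      have : ((j - i : ℕ) : ℝ) ≤ j := by
        have : j - i ≤ j := by omega
        exact_mod_cast this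
      have hjn : 2 * (j:ℝ) < n := by exact_mod_cast h2j
      nlinarith
    · rw [if_pos (by norm_num), inv_inj, Nat.cast_sub hij]
  · -- si = -1, sj = 1, x = 2π(j-i)/n
    have hij' : i < j := by
      rcases eq_or_lt_of_le hij with rfl | h
      · exfalso; apply hne; rw [ff]; ring
      · exact h
    refine ⟨j - i, by omega, by omega, ?_, ?_⟩
    · have hx : (-1:ℝ) * ff n i + 1 * ff n j = 2 * π * (↑(j - i) : ℝ) / n := by
        rw [ff, ff, Nat.cast_sub hij]; field_simp; ring
      rw [hx, abs_toIocMod_eq, abs_of_nonneg (by positivity)]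
      rw [abs_of_nonneg (by positivity), div_le_iff₀ hn0]
      have : ((j - i : ℕ) : ℝ) ≤ j := by
        have : j - i ≤ j := by omega
        exact_mod_cast this
      have hjn : 2 * (j:ℝ) < n := by exact_mod_cast h2j
      nlinarith
    · rw [if_pos (by norm_num), inv_inj, Nat.cast_sub hij]
  · -- si = sj = -1, x = -(2π(i+j)/n)
    have hx : (-1:ℝ) * ff n i + (-1) * ff n j = -(2 * π * (↑(i+j) : ℝ) / n) := by
      rw [ff, ff]; push_cast; ring
    by_cases hc : 2 * (i + j) ≤ n
    · refine ⟨i + j, by omega, hc, ?_, ?_⟩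
      · rw [hx, abs_toIocMod_eq, abs_neg, abs_of_nonneg (by positivity)]
        rw [abs_neg, abs_of_nonneg (by positivity), div_le_iff₀ hn0]
        have : ((2*(i + j):ℕ):ℝ) ≤ n := by exact_mod_cast hc
        push_cast at this; push_cast; nlinarith
      · rw [if_neg (by simp), if_pos, inv_inj]
        · push_cast; ring
        · have : ((2 * (i+j) : ℕ) : ℝ) ≤ n := by exact_mod_cast hc
          push_cast at this; linarith
    · refine ⟨n - (i + j), by omega, by omega, ?_, ?_⟩
      · have hxs : toIocMod Real.two_pi_pos (-π) (-(2 * π * (↑(i+j) : ℝ) / n))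
            = toIocMod Real.two_pi_pos (-π) (-(2 * π * (↑(i+j) : ℝ) / n) + 2 * π) :=
          (toIocMod_add_right _ _ _).symm
        have hcast : ((n - (i+j) : ℕ) : ℝ) = (n:ℝ) - ((i:ℝ) + j) := by
          rw [Nat.cast_sub (by omega)]; push_cast; ring
        have hij2 : (n:ℝ) < 2 * ((i:ℝ) + j) := by
          have : (n:ℕ) < 2 * (i + j) := by omega
          exact_mod_cast this
        have hijn : (i:ℝ) + j ≤ n := by
          have : i + j ≤ n := by omega
          exact_mod_cast this
        have heq : -(2 * π * (↑(i+j) : ℝ) / n) + 2 * π = 2 * π * (↑(n - (i+j)):ℝ) / n := by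
          rw [hcast]; push_cast; field_simp; ring
        rw [hx, hxs, heq, abs_toIocMod_eq, abs_of_nonneg (by positivity)]
        rw [abs_of_nonneg (by positivity), div_le_iff₀ hn0, hcast]
        nlinarith
      · rw [if_neg (by simp), if_neg, inv_inj]
        · rw [Nat.cast_sub (by omega)]; push_cast; ring
        · push_neg
          have : (n:ℕ) < 2 * (i + j) := by omega
          have h2 : (n:ℝ) < 2 * ((i:ℝ) + j) := by exact_mod_cast this
          linarith

end NLaux

/-- **Lemma 1(i)–(ii)** (Nordman–Lahiri). For `n ≥ 3`, `1 ≤ i ≤ j ≤ N = ⌊(n−1)/2⌋`,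
`a_i ∈ {±λ_i}`, `a_j ∈ {±λ_j}` with `a_i + a_j ≠ 0`:
(i) `L_{n0}(a_i + a_j) ≤ n c_{ijn}/(2π)`; and
(ii) for each `0 < d < 1` there is a constant `C(d)`, independent of `n, i, j`, with
`L_{n1}(a_i + a_j) ≤ min{log(nπ) L_{n0}(a_i + a_j), n C(d) c_{ijn}^d}`. -/
theorem lfun_fourier_frequency_bounds :
    (∀ n : ℕ, 3 ≤ n → ∀ i j : ℕ, 1 ≤ i → i ≤ j → j ≤ (n - 1) / 2 →
      ∀ si sj : ℝ, (si = 1 ∨ si = -1) → (sj = 1 ∨ sj = -1) →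
      si * ff n i + sj * ff n j ≠ 0 →
      Lfun n 0 (si * ff n i + sj * ff n j) ≤
        (n : ℝ) * (if si ≠ sj then ((j : ℝ) - (i : ℝ))⁻¹
          else if (i : ℝ) + (j : ℝ) ≤ (n : ℝ) / 2 then ((j : ℝ) + (i : ℝ))⁻¹
          else ((n : ℝ) - (j : ℝ) - (i : ℝ))⁻¹) / (2 * π)) ∧
    (∀ d : ℝ, 0 < d → d < 1 → ∃ Cd : ℝ,
      ∀ n : ℕ, 3 ≤ n → ∀ i j : ℕ, 1 ≤ i → i ≤ j → j ≤ (n - 1) / 2 →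
      ∀ si sj : ℝ, (si = 1 ∨ si = -1) → (sj = 1 ∨ sj = -1) →
      si * ff n i + sj * ff n j ≠ 0 →
      Lfun n 1 (si * ff n i + sj * ff n j) ≤
        min (Real.log ((n : ℝ) * π) * Lfun n 0 (si * ff n i + sj * ff n j))
          ((n : ℝ) * Cd * (if si ≠ sj then ((j : ℝ) - (i : ℝ))⁻¹
            else if (i : ℝ) + (j : ℝ) ≤ (n : ℝ) / 2 then ((j : ℝ) + (i : ℝ))⁻¹
            else ((n : ℝ) - (j : ℝ) - (i : ℝ))⁻¹) ^ d)) := by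
  have hpi := Real.pi_gt_three
  constructor
  · intro n hn i j hi hij hjN si sj hsi hsj hne
    obtain ⟨k, hk1, hk2, hrep, hval⟩ := NLaux.key n hn i j hi hij hjN si sj hsi hsj hne
    obtain ⟨hL0, _⟩ := NLaux.Lfun_eq_of_rep n k hn hk1 _ hrep
    rw [hL0, hval]
    apply le_of_eq
    rw [← div_eq_mul_inv, div_div, mul_comm (k:ℝ) (2*π)]
  · intro d hd0 hd1
    refine ⟨(Real.log (2 * π) + 1 / (1 - d)) / (2 * π), ?_⟩
    intro n hn i j hi hij hjN si sj hsi hsj hne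
    obtain ⟨k, hk1, hk2, hrep, hval⟩ := NLaux.key n hn i j hi hij hjN si sj hsi hsj hne
    obtain ⟨hL0, hL1⟩ := NLaux.Lfun_eq_of_rep n k hn hk1 _ hrep
    rw [hL0, hL1, hval]
    have hk0 : (1:ℝ) ≤ k := by exact_mod_cast hk1
    have hK0 : (0:ℝ) < k := by linarith
    have hn0 : (0:ℝ) < n := by
      have : (3:ℝ) ≤ n := by exact_mod_cast hn
      linarith
    have h2pk : (0:ℝ) < 2 * π * k := by positivity
    have hnn : (0:ℝ) ≤ n / (2 * π * k) := by positivity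
    apply le_min
    · apply mul_le_mul_of_nonneg_right _ hnn
      apply Real.log_le_log h2pk
      have : 2 * (k:ℝ) ≤ n := by exact_mod_cast hk2
      nlinarith
    · set K : ℝ := (k : ℝ)
      have hd' : (0:ℝ) < 1 - d := by linarith
      have hK1d : (1:ℝ) ≤ K ^ (1 - d) := Real.one_le_rpow hk0 (by linarith)
      have hlogK : Real.log K ≤ K ^ (1 - d) / (1 - d) := by
        rw [le_div_iff₀ hd']
        have h1 : Real.log (K ^ (1 - d)) = (1 - d) * Real.log K := Real.log_rpow hK0 _
        have h2 : Real.log (K ^ (1 - d)) ≤ K ^ (1 - d) - 1 :=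
          Real.log_le_sub_one_of_pos (by positivity)
        nlinarith
      have hlog2pi : (0:ℝ) ≤ Real.log (2 * π) := by
        apply Real.log_nonneg; nlinarith
      have hmain : Real.log (2 * π * K) ≤
          (Real.log (2 * π) + 1 / (1 - d)) * K ^ (1 - d) := by
        rw [Real.log_mul (by positivity) (by positivity)]
        have hlogK0 : 0 ≤ Real.log K := Real.log_nonneg hk0
        have : 1 / (1 - d) * K ^ (1 - d) ≥ Real.log K := by
          rw [ge_iff_le, div_mul_eq_mul_div, one_mul]
          exact hlogK
        nlinarith
      have heq : ((n:ℝ) * ((Real.log (2 * π) + 1 / (1 - d)) / (2 * π)) * K⁻¹ ^ d)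
          = ((Real.log (2 * π) + 1 / (1 - d)) * K ^ (1 - d)) * (n / (2 * π * K)) := by
        rw [Real.inv_rpow (le_of_lt hK0), Real.rpow_sub hK0, Real.rpow_one]
        have hKd : (0:ℝ) < K ^ d := Real.rpow_pos_of_pos hK0 d
        field_simp
      rw [heq]
      exact mul_le_mul_of_nonneg_right hmain hnn
end

section
/- There exists a constant C such that for all n ≥ 2 and all r_1, r_2 ∈ ℝ: ∫_{−π}^{π} L_{n0}(r_1 + λ) L_{n0}(r_2 − λ) dλ ≤ C L_{n1}(r_1 + r_2), and ∫_{−π}^{π} L_{n0}²(r_1 + λ) L_{n0}²(r_2 − λ) dλ ≤ C n L_{n0}²(r_1 + r_2). -/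
open Real Filter Topology

noncomputable section NLaux

/-- representative in `(-π, π]` -/
def rep (x : ℝ) : ℝ := toIocMod Real.two_pi_pos (-π) x

/-- circle distance to `0` -/
def dd (x : ℝ) : ℝ := |rep x|

lemma Lfun_def (n s : ℕ) (x : ℝ) : Lfun n s x = Lbase n s (rep x) := rfl

lemma rep_mem (x : ℝ) : rep x ∈ Set.Ioc (-π) π := by
  have h := toIocMod_mem_Ioc Real.two_pi_pos (-π) x
  rwa [show -π + 2 * π = π by ring] at h

lemma rep_eq_self {x : ℝ} (h : x ∈ Set.Ioc (-π) π) : rep x = x := by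
  apply (toIocMod_eq_self Real.two_pi_pos).2
  rwa [show -π + 2 * π = π by ring]

lemma rep_neg_pi : rep (-π) = π := by
  have h2 : rep (-π + 2 * π) = rep (-π) := toIocMod_add_right _ _ _
  rw [show -π + 2 * π = π by ring] at h2
  rw [← h2, rep_eq_self ⟨by linarith [Real.pi_pos], le_refl π⟩]

lemma dd_nonneg (x : ℝ) : 0 ≤ dd x := abs_nonneg _

lemma dd_le_pi (x : ℝ) : dd x ≤ π := by
  have h := rep_mem x
  rw [dd, abs_le]
  exact ⟨by linarith [h.1], h.2⟩

lemma dd_le_abs (x : ℝ) : dd x ≤ |x| := by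
  rcases le_or_gt |x| π with h | h
  · rcases eq_or_lt_of_le (neg_le_of_abs_le h) with h1 | h1
    · rw [← h1, dd, rep_neg_pi, abs_neg, abs_of_nonneg Real.pi_pos.le]
    · rw [dd, rep_eq_self ⟨h1, le_of_abs_le h⟩]
  · exact (dd_le_pi x).trans h.le

lemma dd_eq_abs {x : ℝ} (h : x ∈ Set.Icc (-π) π) : dd x = |x| := by
  rcases eq_or_lt_of_le h.1 with h1 | h1
  · rw [dd, ← h1, rep_neg_pi, abs_neg]
  · rw [dd, rep_eq_self ⟨h1, h.2⟩]

lemma dd_add_le (x y : ℝ) : dd (x + y) ≤ dd x + dd y := by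
  have e : rep x + rep y
      = (x + y) - (toIocDiv Real.two_pi_pos (-π) x + toIocDiv Real.two_pi_pos (-π) y) • (2*π) := by
    rw [add_smul, rep, rep]
    rw [← self_sub_toIocDiv_zsmul Real.two_pi_pos (-π) x,
      ← self_sub_toIocDiv_zsmul Real.two_pi_pos (-π) y]
    ring
  have e2 : rep (x + y) = rep (rep x + rep y) := by
    rw [rep, rep, e, toIocMod_sub_zsmul]
  calc dd (x + y) = dd (rep x + rep y) := by rw [dd, dd, e2]
    _ ≤ |rep x + rep y| := dd_le_abs _
    _ ≤ |rep x| + |rep y| := abs_add_le _ _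

lemma rep_periodic : Function.Periodic rep (2 * π) := fun x => toIocMod_add_right _ _ _

lemma dd_periodic : Function.Periodic dd (2 * π) := fun x => by rw [dd, dd, rep_periodic x]

lemma Lfun_periodic (n s : ℕ) : Function.Periodic (Lfun n s) (2 * π) := fun x => by
  rw [Lfun_def, Lfun_def, rep_periodic x]

lemma measurable_rep : Measurable rep := by
  have h : rep = fun b => b + (⌊(-π + 2*π - b) / (2*π)⌋ : ℝ) * (2*π) := by
    funext b
    rw [rep, toIocMod, toIocDiv_eq_neg_floor, neg_smul, sub_neg_eq_add, zsmul_eq_mul]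
  rw [h]
  have h2 : Measurable fun b : ℝ => ⌊(-π + 2*π - b) / (2*π)⌋ :=
    ((measurable_id.const_sub _).div_const _).floor
  exact measurable_id.add ((measurable_from_top.comp h2).mul measurable_const)

lemma measurable_dd : Measurable dd := measurable_rep.abs

lemma measurable_Lbase (n s : ℕ) : Measurable (Lbase n s) := by
  unfold Lbase
  apply Measurable.ite (measurableSet_le measurable_abs measurable_const) measurable_const
  exact ((measurable_const.mul measurable_abs).log.pow_const s).div measurable_abs

lemma measurable_Lfun (n s : ℕ) : Measurable (Lfun n s) :=
  (measurable_Lbase n s).comp measurable_rep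

end NLaux

section NLaux2

open Real Filter Topology MeasureTheory intervalIntegral

lemma Lfun0_eq (n : ℕ) (x : ℝ) :
    Lfun n 0 x = if dd x ≤ 1 / (n:ℝ) then (n:ℝ) else 1 / dd x := by
  rw [Lfun_def, Lbase]
  simp only [Nat.cast_zero, Real.exp_zero, neg_zero, pow_zero, one_mul]
  rfl

variable {n : ℕ} (hn : 2 ≤ n)

lemma Ncast (hn : 2 ≤ n) : (2:ℝ) ≤ (n:ℝ) := by exact_mod_cast hn

lemma Lfun0_nonneg (n : ℕ) (x : ℝ) : 0 ≤ Lfun n 0 x := by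
  rw [Lfun0_eq]
  split
  · positivity
  · exact div_nonneg one_pos.le (dd_nonneg x)

lemma Lfun0_le (hn : 2 ≤ n) (x : ℝ) : Lfun n 0 x ≤ (n:ℝ) := by
  have hN : (2:ℝ) ≤ (n:ℝ) := Ncast hn
  rw [Lfun0_eq]
  split
  · exact le_refl _
  · next h =>
    push_neg at h
    have h0 : 0 < dd x := lt_trans (by positivity) h
    rw [div_le_iff₀ h0]
    rw [div_lt_iff₀ (by linarith : (0:ℝ) < (n:ℝ))] at h
    nlinarith

lemma Lfun0_mul_dd_le_one (hn : 2 ≤ n) (x : ℝ) : Lfun n 0 x * dd x ≤ 1 := by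
  have hN : (2:ℝ) ≤ (n:ℝ) := Ncast hn
  rw [Lfun0_eq]
  split
  · next h =>
    calc (n:ℝ) * dd x ≤ (n:ℝ) * (1 / n) := by
          apply mul_le_mul_of_nonneg_left h (by linarith)
      _ = 1 := by field_simp
  · next h =>
    push_neg at h
    have h2 : 0 < dd x := lt_trans (by positivity) h
    rw [one_div, inv_mul_cancel₀ (ne_of_gt h2)]

lemma Lfun0_le_inv (hn : 2 ≤ n) {x : ℝ} (h : 0 < dd x) : Lfun n 0 x ≤ 1 / dd x := by
  rw [le_div_iff₀ h]
  exact Lfun0_mul_dd_le_one hn x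

lemma Lfun0_le_two (hn : 2 ≤ n) {x s : ℝ} (h : dd s ≤ 2 * dd x) :
    Lfun n 0 x ≤ 2 * Lfun n 0 s := by
  have hN : (2:ℝ) ≤ (n:ℝ) := Ncast hn
  by_cases hds : dd s ≤ 1 / (n:ℝ)
  · have : Lfun n 0 s = (n:ℝ) := by rw [Lfun0_eq, if_pos hds]
    rw [this]
    linarith [Lfun0_le hn x]
  · push_neg at hds
    have hds0 : 0 < dd s := lt_trans (by positivity) hds
    have hx0 : 0 < dd x := by linarith
    have : Lfun n 0 s = 1 / dd s := by rw [Lfun0_eq, if_neg (not_le.2 hds)]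
    rw [this]
    calc Lfun n 0 x ≤ 1 / dd x := Lfun0_le_inv hn hx0
      _ ≤ 1 / (dd s / 2) := one_div_le_one_div_of_le (by linarith) (by linarith)
      _ = 2 * (1 / dd s) := by rw [one_div_div, mul_one_div]

/-- bounded measurable functions are interval integrable -/
lemma intInt {F : ℝ → ℝ} (hm : Measurable F) {M : ℝ} (hb : ∀ x, |F x| ≤ M) (a b : ℝ) :
    IntervalIntegrable F volume a b := by
  refine IntervalIntegrable.mono_fun' (g := fun _ => M) intervalIntegrable_const
    hm.aestronglyMeasurable ?_
  exact Filter.Eventually.of_forall fun x => by simpa using hb x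

lemma per_shift {F : ℝ → ℝ} (hF : Function.Periodic F (2*π)) (c : ℝ) :
    ∫ x in (-π)..π, F (c + x) = ∫ x in (-π)..π, F x := by
  rw [intervalIntegral.integral_comp_add_left]
  rw [show c + π = (c + -π) + 2*π by ring]
  rw [hF.intervalIntegral_add_eq (c + -π) (-π)]
  rw [show -π + 2*π = π by ring]

lemma per_reflect {F : ℝ → ℝ} (hF : Function.Periodic F (2*π)) (c : ℝ) :
    ∫ x in (-π)..π, F (c - x) = ∫ x in (-π)..π, F x := by
  have h1 : (fun x => F (c - x)) = fun x => (fun y => F (c + y)) (-x) := by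
    funext x; rw [sub_eq_add_neg]
  rw [h1, intervalIntegral.integral_comp_neg (fun y => F (c + y)), neg_neg]
  exact per_shift hF c

lemma integral_congr_ae' {f g : ℝ → ℝ} {a b c : ℝ}
    (h : ∀ x, x ≠ c → x ∈ Set.uIoc a b → f x = g x) :
    ∫ x in a..b, f x = ∫ x in a..b, g x := by
  apply intervalIntegral.integral_congr_ae
  have h0 : {x : ℝ | ¬ x ≠ c} = {c} := by ext y; simp [not_not]
  have hae : ∀ᵐ x ∂(volume : Measure ℝ), x ≠ c := by
    rw [MeasureTheory.ae_iff, h0]; exact measure_singleton c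
  filter_upwards [hae] with x hx hmem using h x hx hmem

lemma integral_even {g : ℝ → ℝ} (he : ∀ x, g (-x) = g x)
    (hi : ∀ a b : ℝ, IntervalIntegrable g volume a b) :
    ∫ x in (-π)..π, g x = 2 * ∫ x in (0:ℝ)..π, g x := by
  have h1 : ∫ x in (-π)..(0:ℝ), g x = ∫ x in (0:ℝ)..π, g x := by
    have h2 : ∫ x in (0:ℝ)..π, g (-x) = ∫ x in (-π)..(0:ℝ), g x := by
      rw [intervalIntegral.integral_comp_neg g]; norm_num
    rw [← h2]
    congr 1
    funext x
    exact he x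
  rw [← intervalIntegral.integral_add_adjacent_intervals (hi (-π) 0) (hi 0 π), h1]
  ring

end NLaux2

section NLaux3

open Real Filter Topology MeasureTheory intervalIntegral

variable {n : ℕ}

lemma zpow_key (y : ℝ) : (1/y)^2 = y^(-2:ℤ) := by
  rw [one_div, inv_pow, ← zpow_natCast y 2, ← zpow_neg]
  norm_num

lemma int_near (hn : 2 ≤ n) {t : ℝ} (ht1 : 1/(n:ℝ) < t) (ht2 : t ≤ π) :
    ∫ x in (-π)..π, (if dd x < t then Lfun n 0 x else 0) = 2 * (1 + Real.log ((n:ℝ) * t)) := by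
  have hN : (2:ℝ) ≤ (n:ℝ) := Ncast hn
  have hn0 : (0:ℝ) < 1/(n:ℝ) := by positivity
  have ht0 : 0 < t := lt_trans hn0 ht1
  set e : ℝ → ℝ := fun x => if |x| < t then (if |x| ≤ 1/(n:ℝ) then (n:ℝ) else 1/|x|) else 0
    with he
  have hmeas : Measurable e := by
    apply Measurable.ite (measurableSet_lt measurable_abs measurable_const) _ measurable_const
    exact Measurable.ite (measurableSet_le measurable_abs measurable_const) measurable_const
      (measurable_const.div measurable_abs)
  have hbound : ∀ x, |e x| ≤ (n:ℝ) := by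
    intro x
    rw [abs_le]
    simp only [he]
    split_ifs with h1 h2
    · exact ⟨by linarith, le_refl _⟩
    · push_neg at h2
      have hx0 : 0 < |x| := lt_trans hn0 h2
      constructor
      · have h3 : (0:ℝ) ≤ 1/|x| := by positivity
        linarith
      · rw [div_le_iff₀ hx0]
        rw [div_lt_iff₀ (by linarith : (0:ℝ) < (n:ℝ))] at h2
        nlinarith
    · exact ⟨by linarith, by linarith⟩
  have hint : ∀ a b : ℝ, IntervalIntegrable e volume a b := fun a b => intInt hmeas hbound a b
  have heven : ∀ x, e (-x) = e x := by intro x; simp only [he, abs_neg]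
  have hcongr : ∫ x in (-π)..π, (if dd x < t then Lfun n 0 x else 0) = ∫ x in (-π)..π, e x := by
    apply intervalIntegral.integral_congr
    intro x hx
    rw [Set.uIcc_of_le (by linarith [Real.pi_pos] : -π ≤ π)] at hx
    simp only [he]
    rw [Lfun0_eq, dd_eq_abs hx]
  rw [hcongr, integral_even heven hint]
  have hsplit : ∫ x in (0:ℝ)..π, e x =
      (∫ x in (0:ℝ)..(1/(n:ℝ)), e x) + (∫ x in (1/(n:ℝ))..t, e x) + (∫ x in t..π, e x) := by
    rw [intervalIntegral.integral_add_adjacent_intervals (hint 0 (1/(n:ℝ))) (hint (1/(n:ℝ)) t),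
      intervalIntegral.integral_add_adjacent_intervals (hint 0 t) (hint t π)]
  have hp1 : ∫ x in (0:ℝ)..(1/(n:ℝ)), e x = 1 := by
    have h1 : ∫ x in (0:ℝ)..(1/(n:ℝ)), e x = ∫ _x in (0:ℝ)..(1/(n:ℝ)), (n:ℝ) := by
      apply intervalIntegral.integral_congr
      intro x hx
      rw [Set.uIcc_of_le (le_of_lt hn0)] at hx
      simp only [he, abs_of_nonneg hx.1]
      rw [if_pos (lt_of_le_of_lt hx.2 ht1), if_pos hx.2]
    rw [h1, intervalIntegral.integral_const, smul_eq_mul]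
    field_simp
    ring
  have hp2 : ∫ x in (1/(n:ℝ))..t, e x = Real.log ((n:ℝ) * t) := by
    have h1 : ∫ x in (1/(n:ℝ))..t, e x = ∫ x in (1/(n:ℝ))..t, 1/x := by
      apply integral_congr_ae' (c := t)
      intro x hxt hx
      rw [Set.uIoc_of_le (le_of_lt ht1)] at hx
      have hx0 : 0 < x := lt_trans hn0 hx.1
      simp only [he, abs_of_nonneg hx0.le]
      rw [if_pos (lt_of_le_of_ne hx.2 hxt), if_neg (not_le.2 hx.1)]
    rw [h1, integral_one_div (by rw [Set.uIcc_of_le ht1.le]; rintro ⟨h1, -⟩; linarith)]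
    rw [show t / (1/(n:ℝ)) = (n:ℝ) * t by
      field_simp]
  have hp3 : ∫ x in t..π, e x = 0 := by
    have h1 : ∫ x in t..π, e x = ∫ _x in t..π, (0:ℝ) := by
      apply intervalIntegral.integral_congr
      intro x hx
      rw [Set.uIcc_of_le ht2] at hx
      simp only [he, abs_of_nonneg (le_trans ht0.le hx.1)]
      rw [if_neg (not_lt.2 hx.1)]
    rw [h1, intervalIntegral.integral_zero]
  rw [hsplit, hp1, hp2, hp3]
  ring

lemma int_far (hn : 2 ≤ n) {t : ℝ} (ht1 : 1/(n:ℝ) < t) (ht2 : t ≤ π) :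
    ∫ x in (-π)..π, (if dd x < t then 0 else (Lfun n 0 x)^2) ≤ 2 / t := by
  have hN : (2:ℝ) ≤ (n:ℝ) := Ncast hn
  have hn0 : (0:ℝ) < 1/(n:ℝ) := by positivity
  have ht0 : 0 < t := lt_trans hn0 ht1
  set e : ℝ → ℝ := fun x => if |x| < t then 0 else (1/|x|)^2 with he
  have hmeas : Measurable e := by
    apply Measurable.ite (measurableSet_lt measurable_abs measurable_const) measurable_const
    exact (measurable_const.div measurable_abs).pow_const 2
  have hbound : ∀ x, |e x| ≤ (n:ℝ)^2 := by
    intro x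
    rw [abs_le]
    simp only [he]
    split_ifs with h1
    · constructor <;> nlinarith [sq_nonneg ((n:ℝ))]
    · push_neg at h1
      have hx0 : 0 < |x| := lt_of_lt_of_le (lt_trans hn0 ht1) h1
      constructor
      · have h3' : (0:ℝ) ≤ (1/|x|)^2 := by positivity
        nlinarith [sq_nonneg ((n:ℝ))]
      · have h2 : 1/|x| ≤ (n:ℝ) := by
          rw [div_le_iff₀ hx0]
          have : 1/(n:ℝ) < |x| := lt_of_lt_of_le ht1 h1
          rw [div_lt_iff₀ (by linarith : (0:ℝ) < (n:ℝ))] at this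
          nlinarith
        have h3 : 0 ≤ 1/|x| := by positivity
        nlinarith
  have hint : ∀ a b : ℝ, IntervalIntegrable e volume a b := fun a b => intInt hmeas hbound a b
  have heven : ∀ x, e (-x) = e x := by intro x; simp only [he, abs_neg]
  have hcongr : ∫ x in (-π)..π, (if dd x < t then 0 else (Lfun n 0 x)^2)
      = ∫ x in (-π)..π, e x := by
    apply intervalIntegral.integral_congr
    intro x hx
    rw [Set.uIcc_of_le (by linarith [Real.pi_pos] : -π ≤ π)] at hx
    simp only [he]
    rw [Lfun0_eq, dd_eq_abs hx]
    by_cases hlt : |x| < t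
    · rw [if_pos hlt, if_pos hlt]
    · have h5 : ¬ |x| ≤ 1/(n:ℝ) := by push_neg at hlt ⊢; exact lt_of_lt_of_le ht1 hlt
      rw [if_neg hlt, if_neg hlt, if_neg h5]
  rw [hcongr, integral_even heven hint]
  have hp1 : ∫ x in (0:ℝ)..t, e x = 0 := by
    have h1 : ∫ x in (0:ℝ)..t, e x = ∫ _x in (0:ℝ)..t, (0:ℝ) := by
      apply integral_congr_ae' (c := t)
      intro x hxt hx
      rw [Set.uIoc_of_le ht0.le] at hx
      simp only [he, abs_of_nonneg hx.1.le]
      rw [if_pos (lt_of_le_of_ne hx.2 hxt)]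
    rw [h1, intervalIntegral.integral_zero]
  have hp2 : ∫ x in t..π, e x = t⁻¹ - π⁻¹ := by
    have h1 : ∫ x in t..π, e x = ∫ x in t..π, x^(-2:ℤ) := by
      apply intervalIntegral.integral_congr
      intro x hx
      rw [Set.uIcc_of_le ht2] at hx
      simp only [he, abs_of_nonneg (le_trans ht0.le hx.1)]
      rw [if_neg (not_lt.2 hx.1), zpow_key]
    rw [h1, integral_zpow (Or.inr ⟨by norm_num,
      by rw [Set.uIcc_of_le ht2]; rintro ⟨h2, -⟩; linarith⟩)]
    norm_num
    ring
  have hsplit : ∫ x in (0:ℝ)..π, e x = (∫ x in (0:ℝ)..t, e x) + (∫ x in t..π, e x) := by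
    rw [intervalIntegral.integral_add_adjacent_intervals (hint 0 t) (hint t π)]
  rw [hsplit, hp1, hp2]
  have hπ : 0 < π⁻¹ := by positivity
  rw [div_eq_mul_inv]
  linarith

lemma int_sq (hn : 2 ≤ n) : ∫ x in (-π)..π, (Lfun n 0 x)^2 ≤ 4 * (n:ℝ) := by
  have hN : (2:ℝ) ≤ (n:ℝ) := Ncast hn
  have hn0 : (0:ℝ) < 1/(n:ℝ) := by positivity
  have hnπ : 1/(n:ℝ) ≤ π := by
    calc 1/(n:ℝ) ≤ 1/2 := by
          exact one_div_le_one_div_of_le two_pos hN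
      _ ≤ π := by linarith [Real.pi_gt_three]
  set e : ℝ → ℝ := fun x => (if |x| ≤ 1/(n:ℝ) then (n:ℝ) else 1/|x|)^2 with he
  have hmeas : Measurable e := by
    apply Measurable.pow_const
    exact Measurable.ite (measurableSet_le measurable_abs measurable_const) measurable_const
      (measurable_const.div measurable_abs)
  have hbound : ∀ x, |e x| ≤ (n:ℝ)^2 := by
    intro x
    rw [abs_le]
    simp only [he]
    split_ifs with h1
    · constructor <;> nlinarith
    · push_neg at h1
      have hx0 : 0 < |x| := lt_trans hn0 h1
      have h2 : 1/|x| ≤ (n:ℝ) := by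
        rw [div_le_iff₀ hx0]
        rw [div_lt_iff₀ (by linarith : (0:ℝ) < (n:ℝ))] at h1
        nlinarith
      have h3 : 0 ≤ 1/|x| := by positivity
      constructor <;> nlinarith
  have hint : ∀ a b : ℝ, IntervalIntegrable e volume a b := fun a b => intInt hmeas hbound a b
  have heven : ∀ x, e (-x) = e x := by intro x; simp only [he, abs_neg]
  have hcongr : ∫ x in (-π)..π, (Lfun n 0 x)^2 = ∫ x in (-π)..π, e x := by
    apply intervalIntegral.integral_congr
    intro x hx
    rw [Set.uIcc_of_le (by linarith [Real.pi_pos] : -π ≤ π)] at hx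
    simp only [he]
    rw [Lfun0_eq, dd_eq_abs hx]
  rw [hcongr, integral_even heven hint]
  have hp1 : ∫ x in (0:ℝ)..(1/(n:ℝ)), e x = (n:ℝ) := by
    have h1 : ∫ x in (0:ℝ)..(1/(n:ℝ)), e x = ∫ _x in (0:ℝ)..(1/(n:ℝ)), ((n:ℝ)^2) := by
      apply intervalIntegral.integral_congr
      intro x hx
      rw [Set.uIcc_of_le (le_of_lt hn0)] at hx
      simp only [he, abs_of_nonneg hx.1]
      rw [if_pos hx.2]
    rw [h1, intervalIntegral.integral_const, smul_eq_mul]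
    field_simp
    ring
  have hp2 : ∫ x in (1/(n:ℝ))..π, e x = (n:ℝ) - π⁻¹ := by
    have h1 : ∫ x in (1/(n:ℝ))..π, e x = ∫ x in (1/(n:ℝ))..π, x^(-2:ℤ) := by
      apply integral_congr_ae' (c := 1/(n:ℝ))
      intro x hxc hx
      rw [Set.uIoc_of_le hnπ] at hx
      have hx0 : 0 < x := lt_trans hn0 hx.1
      simp only [he, abs_of_nonneg hx0.le]
      rw [if_neg (not_le.2 hx.1), zpow_key]
    rw [h1, integral_zpow (Or.inr ⟨by norm_num,
      by rw [Set.uIcc_of_le hnπ]; rintro ⟨h2, -⟩; linarith⟩)]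
    norm_num
    ring
  have hsplit : ∫ x in (0:ℝ)..π, e x =
      (∫ x in (0:ℝ)..(1/(n:ℝ)), e x) + (∫ x in (1/(n:ℝ))..π, e x) := by
    rw [intervalIntegral.integral_add_adjacent_intervals (hint 0 (1/(n:ℝ))) (hint (1/(n:ℝ)) π)]
  rw [hsplit, hp1, hp2]
  have hπ : 0 < π⁻¹ := by positivity
  linarith

end NLaux3

section NLpointwise

open Real

variable {n : ℕ}

lemma pt_case1 (n : ℕ) (a b : ℝ) :
    Lfun n 0 a * Lfun n 0 b ≤ 1/2 * ((Lfun n 0 a)^2 + (Lfun n 0 b)^2) := by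
  nlinarith [sq_nonneg (Lfun n 0 a - Lfun n 0 b)]

lemma pt_case2 (hn : 2 ≤ n) {D : ℝ} (hDpos : 0 < D) {a b : ℝ} (hab : D ≤ dd a + dd b) :
    Lfun n 0 a * Lfun n 0 b ≤
      (2/D * (if dd a < D/2 then Lfun n 0 a else 0)
        + 2/D * (if dd b < D/2 then Lfun n 0 b else 0))
      + (1/2 * (if dd a < D/2 then 0 else (Lfun n 0 a)^2)
        + 1/2 * (if dd b < D/2 then 0 else (Lfun n 0 b)^2)) := by
  have ht0 : 0 < D/2 := by linarith
  by_cases h1 : dd a < D/2 <;> by_cases h2 : dd b < D/2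
  · exfalso; linarith
  · rw [if_pos h1, if_neg h2, if_pos h1, if_neg h2]
    push_neg at h2
    have hdb : 0 < dd b := lt_of_lt_of_le ht0 h2
    have hfb : Lfun n 0 b ≤ 2/D := by
      calc Lfun n 0 b ≤ 1/dd b := Lfun0_le_inv hn hdb
        _ ≤ 1/(D/2) := one_div_le_one_div_of_le ht0 h2
        _ = 2/D := one_div_div _ _
    have h5 := mul_le_mul_of_nonneg_left hfb (Lfun0_nonneg n a)
    nlinarith [sq_nonneg (Lfun n 0 b), Lfun0_nonneg n a, hDpos]
  · rw [if_neg h1, if_pos h2, if_neg h1, if_pos h2]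
    push_neg at h1
    have hda : 0 < dd a := lt_of_lt_of_le ht0 h1
    have hfa : Lfun n 0 a ≤ 2/D := by
      calc Lfun n 0 a ≤ 1/dd a := Lfun0_le_inv hn hda
        _ ≤ 1/(D/2) := one_div_le_one_div_of_le ht0 h1
        _ = 2/D := one_div_div _ _
    have h5 := mul_le_mul_of_nonneg_right hfa (Lfun0_nonneg n b)
    nlinarith [sq_nonneg (Lfun n 0 a), Lfun0_nonneg n b, hDpos]
  · rw [if_neg h1, if_neg h2, if_neg h1, if_neg h2]
    nlinarith [sq_nonneg (Lfun n 0 a - Lfun n 0 b)]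

lemma pt_part2 (hn : 2 ≤ n) {a b sx : ℝ} (hab : dd sx ≤ dd a + dd b) :
    (Lfun n 0 a)^2 * (Lfun n 0 b)^2
      ≤ 8 * (Lfun n 0 sx)^2 * ((Lfun n 0 a)^2 + (Lfun n 0 b)^2) := by
  have h8 : Lfun n 0 a * Lfun n 0 b ≤ 2 * Lfun n 0 sx * (Lfun n 0 a + Lfun n 0 b) := by
    rcases le_or_gt (dd sx) (2 * dd a) with h | h
    · have h7 := Lfun0_le_two hn (s := sx) h
      nlinarith [Lfun0_nonneg n a, Lfun0_nonneg n b, Lfun0_nonneg n sx]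
    · have h6 : dd sx ≤ 2 * dd b := by linarith
      have h7 := Lfun0_le_two hn (s := sx) h6
      nlinarith [Lfun0_nonneg n a, Lfun0_nonneg n b, Lfun0_nonneg n sx]
  have h9 : (Lfun n 0 a * Lfun n 0 b)^2
      ≤ (2 * Lfun n 0 sx * (Lfun n 0 a + Lfun n 0 b))^2 :=
    pow_le_pow_left₀ (mul_nonneg (Lfun0_nonneg n a) (Lfun0_nonneg n b)) h8 2
  nlinarith [h9, mul_nonneg (sq_nonneg (Lfun n 0 sx))
    (sq_nonneg (Lfun n 0 a - Lfun n 0 b))]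

end NLpointwise

open MeasureTheory


/-- **Lemma 1(iv)** (Nordman–Lahiri). There is a constant `C` such that for all `n ≥ 2` and
all `r₁, r₂ ∈ ℝ`: `∫_{−π}^{π} L_{n0}(r₁+λ) L_{n0}(r₂−λ) dλ ≤ C L_{n1}(r₁+r₂)` and
`∫_{−π}^{π} L_{n0}²(r₁+λ) L_{n0}²(r₂−λ) dλ ≤ C n L_{n0}²(r₁+r₂)`. -/
theorem lfun_convolution_bounds :
    ∃ C : ℝ, ∀ n : ℕ, 2 ≤ n → ∀ r₁ r₂ : ℝ,
      (∫ lam in (-π)..π, Lfun n 0 (r₁ + lam) * Lfun n 0 (r₂ - lam)) ≤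
        C * Lfun n 1 (r₁ + r₂) ∧
      (∫ lam in (-π)..π, (Lfun n 0 (r₁ + lam)) ^ 2 * (Lfun n 0 (r₂ - lam)) ^ 2) ≤
        C * n * (Lfun n 0 (r₁ + r₂)) ^ 2 := by
  refine ⟨100, fun n hn r₁ r₂ => ?_⟩
  have hπ3 := Real.pi_gt_three
  have hπ0 := Real.pi_pos
  have hN : (2:ℝ) ≤ (n:ℝ) := Ncast hn
  have hN0 : (0:ℝ) < (n:ℝ) := by linarith
  have hn0 : (0:ℝ) < 1/(n:ℝ) := by positivity
  set s := r₁ + r₂ with hs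
  set D := dd s with hDdef
  have hD0 : 0 ≤ D := dd_nonneg s
  have hDπ : D ≤ π := dd_le_pi s
  have meas0 := measurable_Lfun n 0
  have hf0 : ∀ x, 0 ≤ Lfun n 0 x := Lfun0_nonneg n
  have hfN : ∀ x, Lfun n 0 x ≤ (n:ℝ) := Lfun0_le hn
  have habs : ∀ x, |Lfun n 0 x| ≤ (n:ℝ) := fun x => abs_le.2 ⟨by linarith [hf0 x], hfN x⟩
  have mal : Measurable fun lam : ℝ => Lfun n 0 (r₁ + lam) :=
    meas0.comp (measurable_const.add measurable_id)
  have mbl : Measurable fun lam : ℝ => Lfun n 0 (r₂ - lam) :=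
    meas0.comp (measurable_const.sub measurable_id)
  have hsqper : Function.Periodic (fun x => (Lfun n 0 x)^2) (2*π) := fun x => by
    simp only []
    rw [Lfun_periodic n 0 x]
  have hIA : ∫ lam in (-π)..π, (Lfun n 0 (r₁ + lam))^2 ≤ 4 * (n:ℝ) :=
    calc (∫ lam in (-π)..π, (Lfun n 0 (r₁ + lam))^2)
        = ∫ x in (-π)..π, (Lfun n 0 x)^2 := per_shift hsqper r₁
      _ ≤ 4 * (n:ℝ) := int_sq hn
  have hIB : ∫ lam in (-π)..π, (Lfun n 0 (r₂ - lam))^2 ≤ 4 * (n:ℝ) :=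
    calc (∫ lam in (-π)..π, (Lfun n 0 (r₂ - lam))^2)
        = ∫ x in (-π)..π, (Lfun n 0 x)^2 := per_reflect hsqper r₂
      _ ≤ 4 * (n:ℝ) := int_sq hn
  have habs2 : ∀ x, |(Lfun n 0 x)^2| ≤ (n:ℝ)^2 := fun x => by
    rw [abs_pow]; exact pow_le_pow_left₀ (abs_nonneg _) (habs x) 2
  have hiA : IntervalIntegrable (fun lam => (Lfun n 0 (r₁ + lam))^2) volume (-π) π :=
    intInt (mal.pow_const 2) (fun x => habs2 (r₁ + x)) _ _
  have hiB : IntervalIntegrable (fun lam => (Lfun n 0 (r₂ - lam))^2) volume (-π) π :=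
    intInt (mbl.pow_const 2) (fun x => habs2 (r₂ - x)) _ _
  have hiP : IntervalIntegrable (fun lam => Lfun n 0 (r₁ + lam) * Lfun n 0 (r₂ - lam))
      volume (-π) π :=
    intInt (mal.mul mbl) (M := (n:ℝ) * (n:ℝ)) (fun x => by
      rw [Pi.mul_apply, abs_mul]
      exact mul_le_mul (habs _) (habs _) (abs_nonneg _) (by linarith)) _ _
  have haddle : ∀ lam : ℝ, D ≤ dd (r₁ + lam) + dd (r₂ - lam) := by
    intro lam
    rw [hDdef, show s = (r₁ + lam) + (r₂ - lam) by rw [hs]; ring]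
    exact dd_add_le _ _
  constructor
  · -- first inequality
    by_cases hcase : D ≤ Real.exp 1 / (n:ℝ)
    · -- near case
      have hL1 : Lfun n 1 s = Real.exp (-1) * (n:ℝ) := by
        rw [Lfun_def, Lbase, if_pos (by rw [Nat.cast_one]; exact hcase)]
        norm_num
      rw [hL1]
      have hexp : Real.exp (-1) * Real.exp 1 = 1 := by rw [← Real.exp_add]; norm_num
      have hE : (1/3 : ℝ) < Real.exp (-1) := by
        nlinarith [hexp, Real.exp_one_lt_d9, Real.exp_pos (-1)]
      calc (∫ lam in (-π)..π, Lfun n 0 (r₁ + lam) * Lfun n 0 (r₂ - lam))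
          ≤ ∫ lam in (-π)..π,
              (1/2) * ((Lfun n 0 (r₁ + lam))^2 + (Lfun n 0 (r₂ - lam))^2) :=
            intervalIntegral.integral_mono_on (by linarith) hiP
              ((hiA.add hiB).const_mul _) (fun lam _ => pt_case1 n _ _)
        _ = (1/2) * ((∫ lam in (-π)..π, (Lfun n 0 (r₁ + lam))^2)
              + ∫ lam in (-π)..π, (Lfun n 0 (r₂ - lam))^2) := by
            rw [intervalIntegral.integral_const_mul, intervalIntegral.integral_add hiA hiB]
        _ ≤ (1/2) * (4 * (n:ℝ) + 4 * (n:ℝ)) := by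
            have := add_le_add hIA hIB; linarith
        _ ≤ 100 * (Real.exp (-1) * (n:ℝ)) := by
            have h1 : (1/3 : ℝ) * (n:ℝ) ≤ Real.exp (-1) * (n:ℝ) :=
              mul_le_mul_of_nonneg_right hE.le (by linarith)
            linarith
    · -- far case
      push_neg at hcase
      have he1 : (2:ℝ) < Real.exp 1 := by
        have := Real.exp_one_gt_d9; norm_num at this ⊢; linarith
      have hD2 : 2/(n:ℝ) < D := by
        have h1 : 2/(n:ℝ) < Real.exp 1/(n:ℝ) := by gcongr
        linarith
      have hDpos : 0 < D := lt_trans (by positivity) hD2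
      have hDne : D ≠ 0 := ne_of_gt hDpos
      have ht0 : 0 < D/2 := by linarith
      have ht1 : 1/(n:ℝ) < D/2 := by
        rw [lt_div_iff₀ (by norm_num : (0:ℝ) < 2)]
        calc 1/(n:ℝ) * 2 = 2/(n:ℝ) := by ring
          _ < D := hD2
      have ht2 : D/2 ≤ π := by linarith
      have hND : Real.exp 1 < (n:ℝ) * D := by
        rw [div_lt_iff₀ hN0] at hcase; linarith [hcase]
      have hlogD : 1 ≤ Real.log ((n:ℝ) * D) := by
        have h1 := Real.log_le_log (Real.exp_pos 1) hND.le
        rwa [Real.log_exp] at h1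
      have hlog2 : Real.log ((n:ℝ) * (D/2)) ≤ Real.log ((n:ℝ) * D) :=
        Real.log_le_log (by positivity) (by nlinarith)
      have hc' : ¬ (|rep s| ≤ Real.exp ((1:ℕ):ℝ) / (n:ℝ)) := by
        rw [Nat.cast_one]; exact not_le.2 hcase
      have hL1 : Lfun n 1 s = Real.log ((n:ℝ) * D) / D := by
        rw [Lfun_def, Lbase, if_neg hc', pow_one]
        rfl
      rw [hL1]
      set H : ℝ → ℝ := fun x => if dd x < D/2 then Lfun n 0 x else 0 with hH
      set H2 : ℝ → ℝ := fun x => if dd x < D/2 then 0 else (Lfun n 0 x)^2 with hH2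
      have hHper : Function.Periodic H (2*π) := fun x => by
        simp only [hH]; rw [dd_periodic x, Lfun_periodic n 0 x]
      have hH2per : Function.Periodic H2 (2*π) := fun x => by
        simp only [hH2]; rw [dd_periodic x, Lfun_periodic n 0 x]
      have mH : Measurable H :=
        Measurable.ite (measurableSet_lt measurable_dd measurable_const) meas0 measurable_const
      have mH2 : Measurable H2 :=
        Measurable.ite (measurableSet_lt measurable_dd measurable_const) measurable_const
          (meas0.pow_const 2)
      have hHb : ∀ x, |H x| ≤ (n:ℝ) := fun x => by
        simp only [hH]; split_ifs
        · exact habs x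
        · rw [abs_zero]; linarith
      have hH2b : ∀ x, |H2 x| ≤ (n:ℝ)^2 := fun x => by
        simp only [hH2]; split_ifs
        · rw [abs_zero]; positivity
        · exact habs2 x
      have hiH1 : IntervalIntegrable (fun lam => H (r₁ + lam)) volume (-π) π :=
        intInt (mH.comp (measurable_const.add measurable_id)) (fun x => hHb _) _ _
      have hiH2 : IntervalIntegrable (fun lam => H (r₂ - lam)) volume (-π) π :=
        intInt (mH.comp (measurable_const.sub measurable_id)) (fun x => hHb _) _ _
      have hiH3 : IntervalIntegrable (fun lam => H2 (r₁ + lam)) volume (-π) π :=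
        intInt (mH2.comp (measurable_const.add measurable_id)) (fun x => hH2b _) _ _
      have hiH4 : IntervalIntegrable (fun lam => H2 (r₂ - lam)) volume (-π) π :=
        intInt (mH2.comp (measurable_const.sub measurable_id)) (fun x => hH2b _) _ _
      have hpt : ∀ lam ∈ Set.Icc (-π) π, Lfun n 0 (r₁ + lam) * Lfun n 0 (r₂ - lam) ≤
          (2/D * H (r₁ + lam) + 2/D * H (r₂ - lam))
            + (1/2 * H2 (r₁ + lam) + 1/2 * H2 (r₂ - lam)) := by
        intro lam _
        simp only [hH, hH2]
        exact pt_case2 hn hDpos (haddle lam)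
      have hKnear := int_near hn ht1 ht2
      have hKfar := int_far hn ht1 ht2
      calc (∫ lam in (-π)..π, Lfun n 0 (r₁ + lam) * Lfun n 0 (r₂ - lam))
          ≤ ∫ lam in (-π)..π, ((2/D * H (r₁ + lam) + 2/D * H (r₂ - lam))
              + (1/2 * H2 (r₁ + lam) + 1/2 * H2 (r₂ - lam))) :=
            intervalIntegral.integral_mono_on (by linarith) hiP
              (((hiH1.const_mul _).add (hiH2.const_mul _)).add
                ((hiH3.const_mul _).add (hiH4.const_mul _))) hpt
        _ = (2/D * (∫ x in (-π)..π, H x) + 2/D * (∫ x in (-π)..π, H x))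
              + (1/2 * (∫ x in (-π)..π, H2 x) + 1/2 * (∫ x in (-π)..π, H2 x)) := by
            rw [intervalIntegral.integral_add ((hiH1.const_mul _).add (hiH2.const_mul _))
                ((hiH3.const_mul _).add (hiH4.const_mul _)),
              intervalIntegral.integral_add (hiH1.const_mul _) (hiH2.const_mul _),
              intervalIntegral.integral_add (hiH3.const_mul _) (hiH4.const_mul _),
              intervalIntegral.integral_const_mul, intervalIntegral.integral_const_mul,
              intervalIntegral.integral_const_mul, intervalIntegral.integral_const_mul,
              per_shift hHper r₁, per_reflect hHper r₂, per_shift hH2per r₁,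
              per_reflect hH2per r₂]
        _ = (4/D) * (2 * (1 + Real.log ((n:ℝ) * (D/2))))
              + (∫ x in (-π)..π, H2 x) := by rw [hKnear]; ring
        _ ≤ (4/D) * (2 * (1 + Real.log ((n:ℝ) * (D/2)))) + 2/(D/2) :=
            add_le_add le_rfl hKfar
        _ = (8 * (1 + Real.log ((n:ℝ) * (D/2))) + 4) / D := by
            field_simp
            ring
        _ ≤ (100 * Real.log ((n:ℝ) * D)) / D := by
            apply (div_le_div_iff_of_pos_right hDpos).2
            linarith [hlogD, hlog2]
        _ = 100 * (Real.log ((n:ℝ) * D) / D) := by ring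
  · -- second inequality
    have hiL : IntervalIntegrable
        (fun lam => (Lfun n 0 (r₁ + lam))^2 * (Lfun n 0 (r₂ - lam))^2) volume (-π) π :=
      intInt ((mal.pow_const 2).mul (mbl.pow_const 2)) (M := (n:ℝ)^2 * (n:ℝ)^2) (fun x => by
        rw [Pi.mul_apply, abs_mul]
        exact mul_le_mul (habs2 _) (habs2 _) (abs_nonneg _) (by positivity)) _ _
    calc (∫ lam in (-π)..π, (Lfun n 0 (r₁ + lam))^2 * (Lfun n 0 (r₂ - lam))^2)
        ≤ ∫ lam in (-π)..π,
            8 * (Lfun n 0 s)^2 * ((Lfun n 0 (r₁ + lam))^2 + (Lfun n 0 (r₂ - lam))^2) :=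
          intervalIntegral.integral_mono_on (by linarith) hiL
            ((hiA.add hiB).const_mul _)
            (fun lam _ => pt_part2 hn (hDdef ▸ haddle lam))
      _ = 8 * (Lfun n 0 s)^2 * ((∫ lam in (-π)..π, (Lfun n 0 (r₁ + lam))^2)
            + ∫ lam in (-π)..π, (Lfun n 0 (r₂ - lam))^2) := by
          rw [intervalIntegral.integral_const_mul, intervalIntegral.integral_add hiA hiB]
      _ ≤ 8 * (Lfun n 0 s)^2 * (4 * (n:ℝ) + 4 * (n:ℝ)) :=
          mul_le_mul_of_nonneg_left (add_le_add hIA hIB) (by positivity)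
      _ ≤ 100 * (n:ℝ) * (Lfun n 0 s)^2 := by
          nlinarith [mul_nonneg hN0.le (sq_nonneg (Lfun n 0 s))]
end
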